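/- Let Λ be a compact metric space, f : Λ → Λ continuous, and suppose the set D = {x ∈ Λ : V_f(x) = M_f(Λ)} is dense in Λ. Then D is residual (contains a dense G_δ) in Λ. -/

import Mathlib

open MeasureTheory Filter Topology
open scoped ENNReal NNReal BoundedContinuousFunction

variable {Λ : Type*}

/-- Empirical measure `(1/(N+1)) ∑_{j=0}^{N} δ_{f^j y}` (this indexing realizes the
sequence `μ_N` for `N ≥ 1`). -/
noncomputable def empP [MetricSpace Λ] [MeasurableSpace Λ] [BorelSpace Λ]
    (f : Λ → Λ) (y : Λ) (N : ℕ) : ProbabilityMeasure Λ :=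
  ⟨((N + 1 : ℕ) : ℝ≥0∞)⁻¹ • ∑ j ∈ Finset.range (N + 1), Measure.dirac (f^[j] y), by
    constructor
    simp [Measure.smul_apply, ENNReal.inv_mul_cancel]⟩

/-- `V_f(y)`: the set of weak* accumulation points of the empirical measures of `y`. -/
def accPts [MetricSpace Λ] [MeasurableSpace Λ] [BorelSpace Λ] (f : Λ → Λ) (y : Λ) :
    Set (ProbabilityMeasure Λ) :=
  {μ | MapClusterPt μ atTop (empP f y)}

/-- `M_f(Λ)`: the set of `f`-invariant Borel probability measures. -/
def invProb [MetricSpace Λ] [MeasurableSpace Λ] [BorelSpace Λ] (f : Λ → Λ) :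
    Set (ProbabilityMeasure Λ) :=
  {μ | (μ : Measure Λ).map f = μ}

/-- The periodic measure of a periodic point `x` of period `k ≥ 1`. -/
noncomputable def perP [MetricSpace Λ] [MeasurableSpace Λ] [BorelSpace Λ]
    (f : Λ → Λ) (x : Λ) (k : ℕ) (hk : 0 < k) : ProbabilityMeasure Λ :=
  ⟨((k : ℕ) : ℝ≥0∞)⁻¹ • ∑ i ∈ Finset.range k, Measure.dirac (f^[i] x), by
    constructor
    simp [Measure.smul_apply, ENNReal.inv_mul_cancel, hk.ne']⟩

section Aux

variable [MetricSpace Λ] [MeasurableSpace Λ] [BorelSpace Λ]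

lemma lintegral_empP (f : Λ → Λ) (y : Λ) (N : ℕ) {g : Λ → ℝ≥0∞} (hg : Measurable g) :
    ∫⁻ ω, g ω ∂(empP f y N : Measure Λ) =
      ((N + 1 : ℕ) : ℝ≥0∞)⁻¹ * ∑ j ∈ Finset.range (N + 1), g (f^[j] y) := by
  show ∫⁻ ω, g ω ∂(((N + 1 : ℕ) : ℝ≥0∞)⁻¹ •
      ∑ j ∈ Finset.range (N + 1), Measure.dirac (f^[j] y)) = _
  rw [lintegral_smul_measure, lintegral_finset_sum_measure]
  congr 1
  exact Finset.sum_congr rfl fun j _ => lintegral_dirac' _ hg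

lemma continuous_empP (f : Λ → Λ) (hf : Continuous f) (N : ℕ) :
    Continuous fun y : Λ => empP f y N := by
  rw [continuous_iff_continuousAt]
  intro x
  rw [ContinuousAt, ProbabilityMeasure.tendsto_iff_forall_lintegral_tendsto]
  intro g
  have hg : Measurable fun ω : Λ => (g ω : ℝ≥0∞) :=
    measurable_coe_nnreal_ennreal.comp g.continuous.measurable
  simp_rw [lintegral_empP f _ N hg]
  refine ENNReal.Tendsto.const_mul ?_ (Or.inr (by simp))
  refine tendsto_finset_sum _ fun j _ => ?_
  exact ((ENNReal.continuous_coe.comp (g.continuous.comp (hf.iterate j))).tendsto x)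

set_option maxHeartbeats 1000000 in
lemma accPts_subset_invProb [CompactSpace Λ] (f : Λ → Λ) (hf : Continuous f) (x : Λ) :
    accPts f x ⊆ invProb f := by
  intro μ hμ
  obtain ⟨φ, hφm, hφt⟩ := TopologicalSpace.FirstCountableTopology.tendsto_subseq hμ
  have key : ∀ g : Λ →ᵇ ℝ≥0,
      ∫⁻ ω, (g (f ω) : ℝ≥0∞) ∂(μ : Measure Λ) = ∫⁻ ω, (g ω : ℝ≥0∞) ∂(μ : Measure Λ) := by
    intro g
    set gf : Λ →ᵇ ℝ≥0 := g.compContinuous ⟨f, hf⟩ with hgf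
    have hg : Measurable fun ω : Λ => (g ω : ℝ≥0∞) :=
      measurable_coe_nnreal_ennreal.comp g.continuous.measurable
    have hgfm : Measurable fun ω : Λ => (gf ω : ℝ≥0∞) :=
      measurable_coe_nnreal_ennreal.comp gf.continuous.measurable
    have hA : Tendsto (fun i => ∫⁻ ω, (g ω : ℝ≥0∞) ∂(empP f x (φ i) : Measure Λ)) atTop
        (𝓝 (∫⁻ ω, (g ω : ℝ≥0∞) ∂(μ : Measure Λ))) :=
      (ProbabilityMeasure.tendsto_iff_forall_lintegral_tendsto.mp hφt) g
    have hB : Tendsto (fun i => ∫⁻ ω, (gf ω : ℝ≥0∞) ∂(empP f x (φ i) : Measure Λ)) atTop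
        (𝓝 (∫⁻ ω, (gf ω : ℝ≥0∞) ∂(μ : Measure Λ))) :=
      (ProbabilityMeasure.tendsto_iff_forall_lintegral_tendsto.mp hφt) gf
    -- the exact identity relating the two lintegrals under empirical measures
    have ident : ∀ N : ℕ,
        ∫⁻ ω, (gf ω : ℝ≥0∞) ∂(empP f x N : Measure Λ)
            + ((N + 1 : ℕ) : ℝ≥0∞)⁻¹ * (g x : ℝ≥0∞)
          = ∫⁻ ω, (g ω : ℝ≥0∞) ∂(empP f x N : Measure Λ)
            + ((N + 1 : ℕ) : ℝ≥0∞)⁻¹ * (g (f^[N + 1] x) : ℝ≥0∞) := by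
      intro N
      rw [lintegral_empP f x N hg, lintegral_empP f x N hgfm]
      have hstep : ∀ j : ℕ, ((gf (f^[j] x) : ℝ≥0∞)) = ((g (f^[j + 1] x) : ℝ≥0∞)) := by
        intro j
        rw [Function.iterate_succ_apply' f j x]
        rfl
      simp_rw [hstep]
      rw [← mul_add, ← mul_add]
      congr 1
      have h1 : ∑ j ∈ Finset.range (N + 2), (g (f^[j] x) : ℝ≥0∞)
          = ∑ j ∈ Finset.range (N + 1), (g (f^[j + 1] x) : ℝ≥0∞) + (g (f^[0] x) : ℝ≥0∞) :=
        Finset.sum_range_succ' _ (N + 1)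
      have h2 : ∑ j ∈ Finset.range (N + 2), (g (f^[j] x) : ℝ≥0∞)
          = ∑ j ∈ Finset.range (N + 1), (g (f^[j] x) : ℝ≥0∞) + (g (f^[N + 1] x) : ℝ≥0∞) :=
        Finset.sum_range_succ _ (N + 1)
      calc ∑ j ∈ Finset.range (N + 1), (g (f^[j + 1] x) : ℝ≥0∞) + (g x : ℝ≥0∞)
          = ∑ j ∈ Finset.range (N + 2), (g (f^[j] x) : ℝ≥0∞) := by
            rw [h1]; simp
        _ = _ := h2
    -- the error terms tend to zero
    have herr : ∀ z : ℕ → Λ, Tendsto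
        (fun i => ((φ i + 1 : ℕ) : ℝ≥0∞)⁻¹ * (g (z i) : ℝ≥0∞)) atTop (𝓝 0) := by
      intro z
      have hφtop : Tendsto (fun i => φ i + 1) atTop atTop :=
        tendsto_atTop_mono (fun i => (hφm.le_apply).trans (Nat.le_succ _)) tendsto_id
      have hinv : Tendsto (fun i => ((φ i + 1 : ℕ) : ℝ≥0∞)⁻¹) atTop (𝓝 0) :=
        ENNReal.tendsto_inv_nat_nhds_zero.comp hφtop
      have hb : Tendsto (fun i => ((φ i + 1 : ℕ) : ℝ≥0∞)⁻¹ * ((nndist g 0 : ℝ≥0) : ℝ≥0∞))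
          atTop (𝓝 0) := by
        convert ENNReal.Tendsto.mul_const hinv (Or.inr ENNReal.coe_ne_top) using 2; simp
      refine tendsto_of_tendsto_of_tendsto_of_le_of_le tendsto_const_nhds hb
        (fun i => zero_le) (fun i => ?_)
      refine mul_le_mul_right ?_ _
      rw [ENNReal.coe_le_coe]
      exact BoundedContinuousFunction.NNReal.upper_bound g (z i)
    have hL : Tendsto (fun i => ∫⁻ ω, (gf ω : ℝ≥0∞) ∂(empP f x (φ i) : Measure Λ)
        + ((φ i + 1 : ℕ) : ℝ≥0∞)⁻¹ * (g x : ℝ≥0∞)) atTop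
        (𝓝 (∫⁻ ω, (gf ω : ℝ≥0∞) ∂(μ : Measure Λ) + 0)) :=
      hB.add (herr fun _ => x)
    have hR : Tendsto (fun i => ∫⁻ ω, (g ω : ℝ≥0∞) ∂(empP f x (φ i) : Measure Λ)
        + ((φ i + 1 : ℕ) : ℝ≥0∞)⁻¹ * (g (f^[φ i + 1] x) : ℝ≥0∞)) atTop
        (𝓝 (∫⁻ ω, (g ω : ℝ≥0∞) ∂(μ : Measure Λ) + 0)) :=
      hA.add (herr fun i => f^[φ i + 1] x)
    have heq : (fun i => ∫⁻ ω, (gf ω : ℝ≥0∞) ∂(empP f x (φ i) : Measure Λ)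
        + ((φ i + 1 : ℕ) : ℝ≥0∞)⁻¹ * (g x : ℝ≥0∞))
        = fun i => ∫⁻ ω, (g ω : ℝ≥0∞) ∂(empP f x (φ i) : Measure Λ)
        + ((φ i + 1 : ℕ) : ℝ≥0∞)⁻¹ * (g (f^[φ i + 1] x) : ℝ≥0∞) :=
      funext fun i => ident (φ i)
    rw [heq] at hL
    have := tendsto_nhds_unique hL hR
    have hgfint : ∫⁻ ω, (gf ω : ℝ≥0∞) ∂(μ : Measure Λ)
        = ∫⁻ ω, (g (f ω) : ℝ≥0∞) ∂(μ : Measure Λ) := by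
      exact lintegral_congr fun ω => rfl
    rw [add_zero, add_zero, hgfint] at this
    exact this
  -- conclude invariance
  show ((μ : Measure Λ).map f) = (μ : Measure Λ)
  haveI : IsProbabilityMeasure ((μ : Measure Λ).map f) :=
    Measure.isProbabilityMeasure_map hf.measurable.aemeasurable
  refine ext_of_forall_lintegral_eq_of_IsFiniteMeasure fun g => ?_
  have hg : Measurable fun ω : Λ => (g ω : ℝ≥0∞) :=
    measurable_coe_nnreal_ennreal.comp g.continuous.measurable
  rw [lintegral_map hg hf.measurable]
  exact key g

end Aux

set_option maxHeartbeats 1000000 in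
/-- if `D = {x ∈ Λ : V_f(x) = M_f(Λ)}` is dense in `Λ`, then `D` is
residual: it contains a dense Gδ set. -/
theorem dense_accPts_eq_inv_is_residual
    [MetricSpace Λ] [CompactSpace Λ] [MeasurableSpace Λ] [BorelSpace Λ]
    (f : Λ → Λ) (hf : Continuous f)
    (hdense : Dense {x : Λ | accPts f x = invProb f}) :
    ∃ S : Set Λ, IsGδ S ∧ Dense S ∧ S ⊆ {x : Λ | accPts f x = invProb f} := by
  rcases isEmpty_or_nonempty Λ with hΛ | hΛ
  · refine ⟨∅, IsGδ.empty, ?_, Set.empty_subset _⟩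
    rw [dense_iff_closure_eq, closure_empty, eq_comm, Set.univ_eq_empty_iff]
    exact hΛ
  obtain ⟨x₀, hx₀⟩ := hdense.nonempty
  letI : MetricSpace (ProbabilityMeasure Λ) :=
    TopologicalSpace.metrizableSpaceMetric (ProbabilityMeasure Λ)
  set q : ℕ → ProbabilityMeasure Λ := empP f x₀ with hq
  set Pset : Set (ℕ × ℕ) :=
    {p | ∃ μ ∈ invProb f, dist (q p.1) μ < ((p.2 : ℝ) + 1)⁻¹} with hPset
  set G : Set Λ := ⋂ p ∈ Pset, ⋂ n : ℕ, ⋃ M ∈ Set.Ici n,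
    {x : Λ | dist (empP f x M) (q p.1) < ((p.2 : ℝ) + 1)⁻¹ + ((p.2 : ℝ) + 1)⁻¹} with hG
  have hGmem : ∀ x : Λ, x ∈ G ↔ ∀ p ∈ Pset, ∀ n : ℕ, ∃ M, n ≤ M ∧
      dist (empP f x M) (q p.1) < ((p.2 : ℝ) + 1)⁻¹ + ((p.2 : ℝ) + 1)⁻¹ := by
    intro x
    simp [hG, Set.mem_iInter, Set.mem_iUnion]
  -- invProb f is contained in the closure of the range of q
  have hinv_sub : invProb f ⊆ closure (Set.range q) := by
    intro μ hμ
    have hacc : μ ∈ accPts f x₀ := by rw [hx₀]; exact hμ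
    have : ClusterPt μ (Filter.map q atTop) := hacc
    have hle : Filter.map q atTop ≤ 𝓟 (Set.range q) := by
      rw [Filter.le_principal_iff]
      exact Filter.range_mem_map
    rw [mem_closure_iff_clusterPt]
    exact this.mono hle
  refine ⟨G, ?_, ?_, ?_⟩
  · -- Gδ
    refine IsGδ.biInter (Set.to_countable _) fun p _ => ?_
    refine IsGδ.iInter fun n => ?_
    refine IsOpen.isGδ ?_
    refine isOpen_biUnion fun M _ => ?_
    exact isOpen_lt (((continuous_empP f hf M).dist continuous_const)) continuous_const
  · -- dense, since D ⊆ G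
    refine Dense.mono ?_ hdense
    intro x hx
    rw [hGmem]
    rintro ⟨N, k⟩ ⟨μ, hμinv, hμd⟩ n
    have hμacc : μ ∈ accPts f x := by
      rw [Set.mem_setOf_eq] at hx; rw [hx]; exact hμinv
    have hfreq := (mapClusterPt_iff_frequently.mp hμacc) (Metric.ball μ (((k : ℝ) + 1)⁻¹))
      (Metric.ball_mem_nhds _ (by positivity))
    obtain ⟨M, hMn, hMball⟩ := (Filter.frequently_atTop.mp hfreq) n
    refine ⟨M, hMn, ?_⟩
    calc dist (empP f x M) (q N) ≤ dist (empP f x M) μ + dist μ (q N) := dist_triangle _ _ _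
      _ < ((k : ℝ) + 1)⁻¹ + ((k : ℝ) + 1)⁻¹ := by
          apply add_lt_add
          · exact Metric.mem_ball.mp hMball
          · rw [dist_comm]; exact hμd
  · -- G ⊆ D
    intro x hx
    rw [Set.mem_setOf_eq]
    refine Set.Subset.antisymm (accPts_subset_invProb f hf x) ?_
    intro μ hμ
    rw [accPts, Set.mem_setOf_eq, mapClusterPt_iff_frequently]
    intro s hs
    obtain ⟨ε, hε, hball⟩ := Metric.mem_nhds_iff.mp hs
    obtain ⟨k, hk⟩ := exists_nat_one_div_lt (show (0 : ℝ) < ε / 3 by linarith)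
    rw [one_div] at hk
    obtain ⟨_, ⟨N, rfl⟩, hNd⟩ := Metric.mem_closure_iff.mp (hinv_sub hμ)
      (((k : ℝ) + 1)⁻¹) (by positivity)
    have hp : ((N, k) : ℕ × ℕ) ∈ Pset := ⟨μ, hμ, by rw [dist_comm]; exact hNd⟩
    rw [Filter.frequently_atTop]
    intro n
    obtain ⟨M, hMn, hMd⟩ := (hGmem x).mp hx (N, k) hp n
    refine ⟨M, hMn, hball ?_⟩
    rw [Metric.mem_ball]
    calc dist (empP f x M) μ ≤ dist (empP f x M) (q N) + dist (q N) μ := dist_triangle _ _ _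
      _ < (((k : ℝ) + 1)⁻¹ + ((k : ℝ) + 1)⁻¹) + ((k : ℝ) + 1)⁻¹ := by
          apply add_lt_add hMd
          rw [dist_comm]; exact hNd
      _ < ε := by
          have : ((k : ℝ) + 1)⁻¹ < ε / 3 := hk
          linarith
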